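/- Let X₁ ⊆ X₀ and Y₁ ⊆ Y₀ be normed spaces, 0 < α ≤ 1, and let T : X₀ → Y₀ with T(X₁) ⊆ Y₁ satisfy ‖Ta − Tb‖_{Y₀} ≤ M₀‖a − b‖_{X₀}^α for all a, b ∈ X₀ and ‖Ta − Tb‖_{Y₁} ≤ M₁‖a − b‖_{X₁}^α for all a, b ∈ X₁, for constants M₀, M₁ > 0. Let 0 ≤ θ ≤ 1, 1 ≤ p ≤ ∞, λ ∈ ℝ, and assume X₁ is dense in X₀. Then T is an α-Hölderian mapping from (X₀,X₁)_{θ,p;λ} into (Y₀,Y₁)_{θ, p/α; λα}: there is a constant c₀ > 0, depending only on M₀, M₁, α, p, λ, such that ‖Ta − Tb‖_{(Y₀,Y₁)_{θ, p/α; λα}} ≤ c₀ · ‖a − b‖_{(X₀,X₁)_{θ,p;λ}}^α for all a, b ∈ (X₀,X₁)_{θ,p;λ}. -/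

import Mathlib

open Set MeasureTheory Filter
open scoped ENNReal Topology

/-- The Peetre K-functional for the couple `(X₀, X₁)` where `X₁` is a subgroup of `X₀`
equipped with its own norm `N1`. -/
noncomputable def Kfun {X : Type*} [NormedAddCommGroup X] (X1 : AddSubgroup X)
    (N1 : X → ℝ) (a : X) (t : ℝ) : ℝ :=
  sInf ((fun a1 => ‖a - a1‖ + t * N1 a1) '' (X1 : Set X))

/-- The quasinorm of the interpolation space with logarithm functor
`(X₀,X₁)_{θ,q;λ}`, i.e. `‖ t ↦ t^{−θ−1/q} (1−log t)^λ K(a,t) ‖_{L^q(0,1)}`,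
with the convention `1/q = 0` for `q = ∞`. -/
noncomputable def interpNorm {X : Type*} [NormedAddCommGroup X] (X1 : AddSubgroup X)
    (N1 : X → ℝ) (θ lam : ℝ) (q : ℝ≥0∞) (a : X) : ℝ≥0∞ :=
  eLpNorm (fun t : ℝ => t ^ (-θ - 1 / q.toReal) * (1 - Real.log t) ^ lam * Kfun X1 N1 a t)
    q (volume.restrict (Ioo (0:ℝ) 1))

section KfunLemmas

variable {X : Type*} [NormedAddCommGroup X] (X1 : AddSubgroup X) (N1 : X → ℝ)

lemma kfun_bddBelow (hN1 : ∀ x, 0 ≤ N1 x) {t : ℝ} (ht : 0 ≤ t) (a : X) :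
    BddBelow ((fun a1 => ‖a - a1‖ + t * N1 a1) '' (X1 : Set X)) := by
  refine ⟨0, ?_⟩
  rintro e ⟨a1, -, rfl⟩
  exact add_nonneg (norm_nonneg _) (mul_nonneg ht (hN1 _))

lemma kfun_nonneg (hN1 : ∀ x, 0 ≤ N1 x) {t : ℝ} (ht : 0 ≤ t) (a : X) :
    0 ≤ Kfun X1 N1 a t := by
  apply Real.sInf_nonneg
  rintro e ⟨a1, -, rfl⟩
  exact add_nonneg (norm_nonneg _) (mul_nonneg ht (hN1 _))

lemma kfun_le (hN1 : ∀ x, 0 ≤ N1 x) {t : ℝ} (ht : 0 ≤ t) (a : X) {a1 : X}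
    (ha1 : a1 ∈ X1) : Kfun X1 N1 a t ≤ ‖a - a1‖ + t * N1 a1 :=
  csInf_le (kfun_bddBelow X1 N1 hN1 ht a) ⟨a1, ha1, rfl⟩

end KfunLemmas

/-- Key estimate: the K-functional of `T a - T b` at `s ^ α` is controlled by the `α`-th
power of the K-functional of `a - b` at `s`. -/
lemma kfun_key {X0 Y0 : Type} [NormedAddCommGroup X0] [NormedAddCommGroup Y0]
    {M0 M1 α : ℝ} (hM0 : 0 < M0) (hα0 : 0 < α)
    (X1 : AddSubgroup X0) (Y1 : AddSubgroup Y0) (N1 : X0 → ℝ) (NY1 : Y0 → ℝ)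
    (hN1 : ∀ x, 0 ≤ N1 x) (hNY1 : ∀ y, 0 ≤ NY1 y)
    (T : X0 → Y0) (hT1 : ∀ a ∈ X1, T a ∈ Y1)
    (hT0 : ∀ a b : X0, ‖T a - T b‖ ≤ M0 * ‖a - b‖ ^ α)
    (hTH : ∀ a ∈ X1, ∀ b ∈ X1, NY1 (T a - T b) ≤ M1 * N1 (a - b) ^ α)
    (hdense : Dense (X1 : Set X0)) (a b : X0) {s : ℝ} (hs : 0 < s) :
    Kfun Y1 NY1 (T a - T b) (s ^ α) ≤
      (2 * max M0 M1) * Kfun X1 N1 (a - b) s ^ α := by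
  have hsα : (0:ℝ) ≤ s ^ α := Real.rpow_nonneg hs.le α
  have hseq : Tendsto (fun n : ℕ => 1 / ((n : ℝ) + 1)) atTop (𝓝 0) :=
    tendsto_one_div_add_atTop_nhds_zero_nat
  -- Step A
  have stepA : ∀ u1 ∈ X1, Kfun Y1 NY1 (T a - T b) (s ^ α) ≤
      (2 * max M0 M1) * (‖a - b - u1‖ + s * N1 u1) ^ α := by
    intro u1 hu1
    set U : ℝ := ‖a - b - u1‖ with hU
    have hU0 : 0 ≤ U := norm_nonneg _
    have stepA1 : Kfun Y1 NY1 (T a - T b) (s ^ α) ≤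
        M0 * U ^ α + s ^ α * (M1 * N1 u1 ^ α) := by
      -- approximate b by elements of X1
      have hb' : ∀ n : ℕ, ∃ c ∈ (X1 : Set X0), dist b c < 1 / ((n : ℝ) + 1) := by
        intro n
        have hbmem : b ∈ closure (X1 : Set X0) := by
          rw [hdense.closure_eq]; trivial
        exact Metric.mem_closure_iff.1 hbmem _ (by positivity)
      choose c hc hcd using hb'
      have key : ∀ n : ℕ, Kfun Y1 NY1 (T a - T b) (s ^ α) ≤
          M0 * (U + 1 / ((n : ℝ) + 1)) ^ α + M0 * (1 / ((n : ℝ) + 1)) ^ α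
            + s ^ α * (M1 * N1 u1 ^ α) := by
        intro n
        have hmem : T (c n + u1) - T (c n) ∈ Y1 :=
          Y1.sub_mem (hT1 _ (X1.add_mem (hc n) hu1)) (hT1 _ (hc n))
        have h1 : Kfun Y1 NY1 (T a - T b) (s ^ α) ≤
            ‖(T a - T b) - (T (c n + u1) - T (c n))‖
              + s ^ α * NY1 (T (c n + u1) - T (c n)) :=
          kfun_le Y1 NY1 hNY1 hsα _ hmem
        have h2 : ‖(T a - T b) - (T (c n + u1) - T (c n))‖ ≤
            M0 * ‖a - (c n + u1)‖ ^ α + M0 * ‖c n - b‖ ^ α := by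
          have : (T a - T b) - (T (c n + u1) - T (c n)) =
              (T a - T (c n + u1)) + (T (c n) - T b) := by abel
          rw [this]
          exact (norm_add_le _ _).trans (add_le_add (hT0 a _) (hT0 _ b))
        have h3 : ‖a - (c n + u1)‖ ≤ U + 1 / ((n : ℝ) + 1) := by
          have : a - (c n + u1) = (a - b - u1) + (b - c n) := by abel
          rw [this]
          refine (norm_add_le _ _).trans (add_le_add le_rfl ?_)
          rw [← dist_eq_norm]
          exact (hcd n).le
        have h4 : ‖c n - b‖ ≤ 1 / ((n : ℝ) + 1) := by
          rw [← dist_eq_norm, dist_comm]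
          exact (hcd n).le
        have h5 : NY1 (T (c n + u1) - T (c n)) ≤ M1 * N1 u1 ^ α := by
          have := hTH _ (X1.add_mem (hc n) hu1) _ (hc n)
          rwa [add_sub_cancel_left] at this
        calc Kfun Y1 NY1 (T a - T b) (s ^ α)
            ≤ ‖(T a - T b) - (T (c n + u1) - T (c n))‖
              + s ^ α * NY1 (T (c n + u1) - T (c n)) := h1
          _ ≤ (M0 * ‖a - (c n + u1)‖ ^ α + M0 * ‖c n - b‖ ^ α)
              + s ^ α * (M1 * N1 u1 ^ α) :=
              add_le_add h2 (mul_le_mul_of_nonneg_left h5 hsα)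
          _ ≤ M0 * (U + 1 / ((n : ℝ) + 1)) ^ α + M0 * (1 / ((n : ℝ) + 1)) ^ α
              + s ^ α * (M1 * N1 u1 ^ α) := by
              have e1 : ‖a - (c n + u1)‖ ^ α ≤ (U + 1 / ((n : ℝ) + 1)) ^ α :=
                Real.rpow_le_rpow (norm_nonneg _) h3 hα0.le
              have e2 : ‖c n - b‖ ^ α ≤ (1 / ((n : ℝ) + 1)) ^ α :=
                Real.rpow_le_rpow (norm_nonneg _) h4 hα0.le
              have := mul_le_mul_of_nonneg_left e1 hM0.le
              have := mul_le_mul_of_nonneg_left e2 hM0.le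
              linarith
      -- pass to the limit
      have hlim : Tendsto (fun n : ℕ =>
          M0 * (U + 1 / ((n : ℝ) + 1)) ^ α + M0 * (1 / ((n : ℝ) + 1)) ^ α
            + s ^ α * (M1 * N1 u1 ^ α)) atTop
          (𝓝 (M0 * U ^ α + s ^ α * (M1 * N1 u1 ^ α))) := by
        have c1 : ContinuousAt (fun x : ℝ => x ^ α) U :=
          Real.continuousAt_rpow_const _ _ (Or.inr hα0.le)
        have c2 : ContinuousAt (fun x : ℝ => x ^ α) 0 :=
          Real.continuousAt_rpow_const _ _ (Or.inr hα0.le)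
        have t1 : Tendsto (fun n : ℕ => (U + 1 / ((n : ℝ) + 1)) ^ α) atTop (𝓝 (U ^ α)) := by
          have : Tendsto (fun n : ℕ => U + 1 / ((n : ℝ) + 1)) atTop (𝓝 (U + 0)) :=
            tendsto_const_nhds.add hseq
          rw [add_zero] at this
          exact c1.tendsto.comp this
        have t2 : Tendsto (fun n : ℕ => (1 / ((n : ℝ) + 1)) ^ α) atTop (𝓝 0) := by
          have := c2.tendsto.comp hseq
          rwa [Real.zero_rpow hα0.ne'] at this
        have := ((t1.const_mul M0).add (t2.const_mul M0)).add
          (tendsto_const_nhds : Tendsto (fun _ : ℕ => s ^ α * (M1 * N1 u1 ^ α)) atTop _)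
        simpa using this
      exact ge_of_tendsto' hlim key
    -- now absorb the constants
    have hV : 0 ≤ N1 u1 := hN1 u1
    have hsum : 0 ≤ U + s * N1 u1 := add_nonneg hU0 (mul_nonneg hs.le hV)
    have e1 : U ^ α ≤ (U + s * N1 u1) ^ α :=
      Real.rpow_le_rpow hU0 (le_add_of_nonneg_right (mul_nonneg hs.le hV)) hα0.le
    have e2 : s ^ α * N1 u1 ^ α = (s * N1 u1) ^ α := (Real.mul_rpow hs.le hV).symm
    have e3 : (s * N1 u1) ^ α ≤ (U + s * N1 u1) ^ α :=
      Real.rpow_le_rpow (mul_nonneg hs.le hV) (le_add_of_nonneg_left hU0) hα0.le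
    have hM0le : M0 ≤ max M0 M1 := le_max_left _ _
    have hM1le : M1 ≤ max M0 M1 := le_max_right _ _
    have hsumα : 0 ≤ (U + s * N1 u1) ^ α := Real.rpow_nonneg hsum α
    have hUα : 0 ≤ U ^ α := Real.rpow_nonneg hU0 α
    have hsVα : 0 ≤ (s * N1 u1) ^ α := Real.rpow_nonneg (mul_nonneg hs.le hV) α
    calc Kfun Y1 NY1 (T a - T b) (s ^ α)
        ≤ M0 * U ^ α + s ^ α * (M1 * N1 u1 ^ α) := stepA1
      _ = M0 * U ^ α + M1 * (s ^ α * N1 u1 ^ α) := by ring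
      _ = M0 * U ^ α + M1 * (s * N1 u1) ^ α := by rw [e2]
      _ ≤ max M0 M1 * (U + s * N1 u1) ^ α + max M0 M1 * (U + s * N1 u1) ^ α := by
          have i1 : M0 * U ^ α ≤ max M0 M1 * (U + s * N1 u1) ^ α :=
            mul_le_mul hM0le e1 hUα (le_trans hM0.le hM0le)
          have i2 : M1 * (s * N1 u1) ^ α ≤ max M0 M1 * (U + s * N1 u1) ^ α :=
            mul_le_mul hM1le e3 hsVα (le_trans hM0.le hM0le)
          linarith
      _ = (2 * max M0 M1) * (U + s * N1 u1) ^ α := by ring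
  -- Step B
  set K : ℝ := Kfun X1 N1 (a - b) s with hK
  have hne : ((fun a1 => ‖(a - b) - a1‖ + s * N1 a1) '' (X1 : Set X0)).Nonempty :=
    ⟨_, ⟨0, X1.zero_mem, rfl⟩⟩
  have keyB : ∀ n : ℕ, Kfun Y1 NY1 (T a - T b) (s ^ α) ≤
      (2 * max M0 M1) * (K + 1 / ((n : ℝ) + 1)) ^ α := by
    intro n
    obtain ⟨e, ⟨u1, hu1, rfl⟩, he⟩ := Real.lt_sInf_add_pos hne
      (show (0:ℝ) < 1 / ((n : ℝ) + 1) by positivity)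
    refine (stepA u1 hu1).trans ?_
    have h2max : (0:ℝ) ≤ 2 * max M0 M1 := by positivity
    refine mul_le_mul_of_nonneg_left ?_ h2max
    exact Real.rpow_le_rpow (add_nonneg (norm_nonneg _) (mul_nonneg hs.le (hN1 _)))
      he.le hα0.le
  have hlimB : Tendsto (fun n : ℕ => (2 * max M0 M1) * (K + 1 / ((n : ℝ) + 1)) ^ α)
      atTop (𝓝 ((2 * max M0 M1) * K ^ α)) := by
    have c1 : ContinuousAt (fun x : ℝ => x ^ α) K :=
      Real.continuousAt_rpow_const _ _ (Or.inr hα0.le)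
    have tK : Tendsto (fun n : ℕ => K + 1 / ((n : ℝ) + 1)) atTop (𝓝 (K + 0)) :=
      tendsto_const_nhds.add hseq
    rw [add_zero] at tK
    exact (c1.tendsto.comp tK).const_mul _
  exact ge_of_tendsto' hlimB keyB

lemma rpow_injOn_Ioi {α : ℝ} (hα0 : 0 < α) : InjOn (fun u : ℝ => u ^ α) (Ioi 0) := by
  have : StrictMonoOn (fun u : ℝ => u ^ α) (Ioi 0) := fun x hx y _ hxy =>
    Real.rpow_lt_rpow (le_of_lt hx) hxy hα0
  exact this.injOn

lemma rpow_hasDerivWithinAt {α : ℝ} {A : Set ℝ} (hA : A ⊆ Ioi 0) {x : ℝ} (hx : x ∈ A) :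
    HasDerivWithinAt (fun u : ℝ => u ^ α) (α * x ^ (α - 1)) A x :=
  (Real.hasDerivAt_rpow_const (Or.inl (ne_of_gt (hA hx)))).hasDerivWithinAt

/-- Change of variables `t = u ^ α` for lower integrals. -/
lemma lintegral_image_rpow {α : ℝ} (hα0 : 0 < α) {A : Set ℝ} (hA : MeasurableSet A)
    (hA' : A ⊆ Ioi 0) (g : ℝ → ℝ≥0∞) :
    ∫⁻ t in (fun u : ℝ => u ^ α) '' A, g t
      = ∫⁻ u in A, ENNReal.ofReal |α * u ^ (α - 1)| * g (u ^ α) := by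
  have h := lintegral_image_eq_lintegral_abs_det_fderiv_mul volume hA
    (f' := fun u => (1 : ℝ →L[ℝ] ℝ).smulRight (α * u ^ (α - 1)))
    (fun x hx => (rpow_hasDerivWithinAt hA' hx).hasFDerivWithinAt)
    ((rpow_injOn_Ioi hα0).mono hA') g
  simpa [ContinuousLinearMap.det_toSpanSingleton] using h

lemma image_rpow_Ioo {α : ℝ} (hα0 : 0 < α) :
    (fun u : ℝ => u ^ α) '' Ioo 0 1 = Ioo (0:ℝ) 1 := by
  ext t
  constructor
  · rintro ⟨s, ⟨hs0, hs1⟩, rfl⟩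
    exact ⟨Real.rpow_pos_of_pos hs0 α, Real.rpow_lt_one hs0.le hs1 hα0⟩
  · rintro ⟨ht0, ht1⟩
    refine ⟨t ^ (1/α), ⟨Real.rpow_pos_of_pos ht0 _,
      Real.rpow_lt_one ht0.le ht1 (by positivity)⟩, ?_⟩
    show (t ^ (1/α)) ^ α = t
    rw [← Real.rpow_mul ht0.le, one_div_mul_cancel hα0.ne', Real.rpow_one]

lemma lintegral_Ioo_rpow_subst {α : ℝ} (hα0 : 0 < α) (g : ℝ → ℝ≥0∞) :
    ∫⁻ t in Ioo (0:ℝ) 1, g t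
      = ∫⁻ u in Ioo (0:ℝ) 1, ENNReal.ofReal |α * u ^ (α - 1)| * g (u ^ α) := by
  conv_lhs => rw [← image_rpow_Ioo hα0]
  exact lintegral_image_rpow hα0 measurableSet_Ioo Ioo_subset_Ioi_self g

lemma aux_log {α e L M : ℝ} (hα0 : 0 < α) (hM0 : 0 < M) (hML : M ≤ L) (hαL : α * L ≤ M) :
    M ^ e ≤ max 1 (α ^ e) * L ^ e := by
  have hL0 : 0 < L := hM0.trans_le hML
  rcases le_or_gt 0 e with he | he
  · have h1 : M ^ e ≤ L ^ e := Real.rpow_le_rpow hM0.le hML he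
    have h2 : (1:ℝ) ≤ max 1 (α ^ e) := le_max_left _ _
    nlinarith [Real.rpow_nonneg hL0.le e]
  · have h1 : M ^ e ≤ (α * L) ^ e :=
      Real.rpow_le_rpow_of_nonpos (by positivity) hαL he.le
    have h2 : (α * L) ^ e = α ^ e * L ^ e := Real.mul_rpow hα0.le hL0.le
    have h3 : α ^ e ≤ max 1 (α ^ e) := le_max_right _ _
    nlinarith [Real.rpow_nonneg hL0.le e, Real.rpow_nonneg hα0.le e]

lemma pointwise_fin {α θ lam r C kx ky s : ℝ} (hα0 : 0 < α) (hα1 : α ≤ 1)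
    (hr : 0 < r) (hC : 0 < C) (hs0 : 0 < s) (hs1 : s < 1)
    (hkx : 0 ≤ kx) (hky : 0 ≤ ky) (hkey : ky ≤ C * kx ^ α) :
    |α * s ^ (α - 1)| *
        ((s ^ α) ^ (-θ - α / r) * (1 - Real.log (s ^ α)) ^ (lam * α) * ky) ^ (r / α)
      ≤ (α * C ^ (r / α) * max 1 (α ^ (lam * r))) *
          (s ^ (-θ - 1 / r) * (1 - Real.log s) ^ lam * kx) ^ r := by
  have hsα : (0:ℝ) < s ^ α := Real.rpow_pos_of_pos hs0 α
  have hlog : Real.log s < 0 := Real.log_neg hs0 hs1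
  set L : ℝ := 1 - Real.log s with hLdef
  have hL1 : 1 ≤ L := by simp only [hLdef]; linarith
  have hL0 : 0 < L := by linarith
  set M : ℝ := 1 - α * Real.log s with hMdef
  have hM1 : 1 ≤ M := by
    have : α * Real.log s ≤ 0 := mul_nonpos_of_nonneg_of_nonpos hα0.le hlog.le
    simp only [hMdef]; linarith
  have hM0 : 0 < M := by linarith
  have hML : M ≤ L := by
    simp only [hMdef, hLdef]
    nlinarith
  have hαL : α * L ≤ M := by
    simp only [hMdef, hLdef]
    nlinarith
  have habs : |α * s ^ (α - 1)| = α * s ^ (α - 1) := abs_of_nonneg (by positivity)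
  have hlogsα : Real.log (s ^ α) = α * Real.log s := Real.log_rpow hs0 α
  have h1 : (s ^ α) ^ (-θ - α / r) = s ^ (α * (-θ - α / r)) := by
    rw [← Real.rpow_mul hs0.le]
  have h2 : (1 : ℝ) - Real.log (s ^ α) = M := by rw [hlogsα]
  rw [habs, h1, h2]
  have h3 : (s ^ (α * (-θ - α / r)) * M ^ (lam * α) * ky) ^ (r / α)
      = s ^ (α * (-θ - α / r) * (r / α)) * M ^ (lam * α * (r / α)) * ky ^ (r / α) := by
    rw [Real.mul_rpow (by positivity) hky, Real.mul_rpow (by positivity) (by positivity),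
      ← Real.rpow_mul hs0.le, ← Real.rpow_mul hM0.le]
  have h4 : α * (-θ - α / r) * (r / α) = -θ * r - α := by
    field_simp
  have h5 : lam * α * (r / α) = lam * r := by
    field_simp
  have h6 : ky ^ (r / α) ≤ C ^ (r / α) * kx ^ r := by
    calc ky ^ (r / α) ≤ (C * kx ^ α) ^ (r / α) :=
          Real.rpow_le_rpow hky hkey (by positivity)
      _ = C ^ (r / α) * (kx ^ α) ^ (r / α) := Real.mul_rpow hC.le (by positivity)
      _ = C ^ (r / α) * kx ^ r := by
          rw [← Real.rpow_mul hkx]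
          congr 1
          field_simp
  have h7 : M ^ (lam * r) ≤ max 1 (α ^ (lam * r)) * L ^ (lam * r) :=
    aux_log hα0 hM0 hML hαL
  have h8 : s ^ (α - 1) * s ^ (-θ * r - α) = s ^ (-θ * r - 1) := by
    rw [← Real.rpow_add hs0]
    congr 1
    ring
  have h9 : (s ^ (-θ - 1 / r) * L ^ lam * kx) ^ r
      = s ^ (-θ * r - 1) * L ^ (lam * r) * kx ^ r := by
    rw [Real.mul_rpow (by positivity) hkx, Real.mul_rpow (by positivity) (by positivity),
      ← Real.rpow_mul hs0.le, ← Real.rpow_mul hL0.le, sub_mul, one_div,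
      inv_mul_cancel₀ hr.ne']
  rw [h3, h4, h5, h9]
  calc α * s ^ (α - 1) * (s ^ (-θ * r - α) * M ^ (lam * r) * ky ^ (r / α))
      = α * (s ^ (α - 1) * s ^ (-θ * r - α)) * (M ^ (lam * r) * ky ^ (r / α)) := by ring
    _ = α * s ^ (-θ * r - 1) * (M ^ (lam * r) * ky ^ (r / α)) := by rw [h8]
    _ ≤ α * s ^ (-θ * r - 1) *
        ((max 1 (α ^ (lam * r)) * L ^ (lam * r)) * (C ^ (r / α) * kx ^ r)) := by
        refine mul_le_mul_of_nonneg_left ?_ (by positivity)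
        exact mul_le_mul h7 h6 (by positivity) (by positivity)
    _ = α * C ^ (r / α) * max 1 (α ^ (lam * r)) *
        (s ^ (-θ * r - 1) * L ^ (lam * r) * kx ^ r) := by ring

lemma pointwise_inf {α θ lam C kx ky s : ℝ} (hα0 : 0 < α) (hα1 : α ≤ 1)
    (hC : 0 < C) (hs0 : 0 < s) (hs1 : s < 1)
    (hkx : 0 ≤ kx) (hky : 0 ≤ ky) (hkey : ky ≤ C * kx ^ α) :
    (s ^ α) ^ (-θ) * (1 - Real.log (s ^ α)) ^ (lam * α) * ky
      ≤ (C * max 1 (α ^ (lam * α))) * (s ^ (-θ) * (1 - Real.log s) ^ lam * kx) ^ α := by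
  have hsα : (0:ℝ) < s ^ α := Real.rpow_pos_of_pos hs0 α
  have hlog : Real.log s < 0 := Real.log_neg hs0 hs1
  set L : ℝ := 1 - Real.log s with hLdef
  have hL1 : 1 ≤ L := by simp only [hLdef]; linarith
  have hL0 : 0 < L := by linarith
  set M : ℝ := 1 - α * Real.log s with hMdef
  have hM1 : 1 ≤ M := by
    have : α * Real.log s ≤ 0 := mul_nonpos_of_nonneg_of_nonpos hα0.le hlog.le
    simp only [hMdef]; linarith
  have hM0 : 0 < M := by linarith
  have hML : M ≤ L := by simp only [hMdef, hLdef]; nlinarith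
  have hαL : α * L ≤ M := by simp only [hMdef, hLdef]; nlinarith
  have hlogsα : Real.log (s ^ α) = α * Real.log s := Real.log_rpow hs0 α
  have h1 : (s ^ α) ^ (-θ) = (s ^ (-θ)) ^ α := by
    rw [← Real.rpow_mul hs0.le, ← Real.rpow_mul hs0.le, mul_comm]
  have h2 : (1 : ℝ) - Real.log (s ^ α) = M := by rw [hlogsα]
  rw [h1, h2]
  have h7 : M ^ (lam * α) ≤ max 1 (α ^ (lam * α)) * L ^ (lam * α) :=
    aux_log hα0 hM0 hML hαL
  have h9 : (s ^ (-θ) * L ^ lam * kx) ^ α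
      = (s ^ (-θ)) ^ α * L ^ (lam * α) * kx ^ α := by
    rw [Real.mul_rpow (by positivity) hkx, Real.mul_rpow (by positivity) (by positivity),
      ← Real.rpow_mul hL0.le]
  rw [h9]
  calc (s ^ (-θ)) ^ α * M ^ (lam * α) * ky
      ≤ (s ^ (-θ)) ^ α * (max 1 (α ^ (lam * α)) * L ^ (lam * α)) * (C * kx ^ α) := by
        have hmm := mul_le_mul h7 hkey hky
          (by positivity : (0:ℝ) ≤ max 1 (α ^ (lam * α)) * L ^ (lam * α))
        calc (s ^ (-θ)) ^ α * M ^ (lam * α) * ky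
            = (s ^ (-θ)) ^ α * (M ^ (lam * α) * ky) := by ring
          _ ≤ (s ^ (-θ)) ^ α * ((max 1 (α ^ (lam * α)) * L ^ (lam * α)) * (C * kx ^ α)) :=
              mul_le_mul_of_nonneg_left hmm (by positivity)
          _ = (s ^ (-θ)) ^ α * (max 1 (α ^ (lam * α)) * L ^ (lam * α)) * (C * kx ^ α) := by
              ring
    _ = (C * max 1 (α ^ (lam * α))) * ((s ^ (-θ)) ^ α * L ^ (lam * α) * kx ^ α) := by ring

/-- Let `X₁ ⊆ X₀`, `Y₁ ⊆ Y₀` be normed spaces, `0 < α ≤ 1`, and let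
`T : X₀ → Y₀` with `T(X₁) ⊆ Y₁` be globally `α`-Hölderian from `X₀` to `Y₀` (constant `M₀`)
and from `X₁` to `Y₁` (constant `M₁`). Let `0 ≤ θ ≤ 1`, `1 ≤ p ≤ ∞`, `λ ∈ ℝ`, and assume
`X₁` dense in `X₀`. Then `T` is `α`-Hölderian from `(X₀,X₁)_{θ,p;λ}` into
`(Y₀,Y₁)_{θ,p/α;λα}`, with a constant `c₀ > 0` depending only on `M₀, M₁, α, p, λ`. -/
theorem stmt4 (M0 M1 α : ℝ) (p : ℝ≥0∞) (lam : ℝ)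
    (hM0 : 0 < M0) (hM1 : 0 < M1) (hα0 : 0 < α) (hα1 : α ≤ 1) (hp : 1 ≤ p) :
    ∃ c0 : ℝ, 0 < c0 ∧
      ∀ (θ : ℝ), 0 ≤ θ → θ ≤ 1 →
      ∀ (X0 Y0 : Type) [NormedAddCommGroup X0] [NormedAddCommGroup Y0]
        (X1 : AddSubgroup X0) (Y1 : AddSubgroup Y0) (N1 : X0 → ℝ) (NY1 : Y0 → ℝ),
        (∀ x, 0 ≤ N1 x) → (∀ y, 0 ≤ NY1 y) →
      ∀ (T : X0 → Y0), (∀ a ∈ X1, T a ∈ Y1) →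
        (∀ a b : X0, ‖T a - T b‖ ≤ M0 * ‖a - b‖ ^ α) →
        (∀ a ∈ X1, ∀ b ∈ X1, NY1 (T a - T b) ≤ M1 * N1 (a - b) ^ α) →
        Dense (X1 : Set X0) →
      ∀ a b : X0, interpNorm X1 N1 θ lam p a < ⊤ → interpNorm X1 N1 θ lam p b < ⊤ →
        interpNorm Y1 NY1 θ (lam * α) (p / ENNReal.ofReal α) (T a - T b) ≤
          ENNReal.ofReal c0 * interpNorm X1 N1 θ lam p (a - b) ^ α := by
  have hp0 : p ≠ 0 := (zero_lt_one.trans_le hp).ne'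
  set C : ℝ := 2 * max M0 M1 with hCdef
  have hmax : 0 < max M0 M1 := lt_max_of_lt_left hM0
  have hC : 0 < C := by positivity
  by_cases hpt : p = ⊤
  · -- case p = ∞
    subst hpt
    refine ⟨C * max 1 (α ^ (lam * α)), by positivity, ?_⟩
    intro θ hθ0 hθ1 X0 Y0 _ _ X1 Y1 N1 NY1 hN1 hNY1 T hT1 hT0 hTH hdense a b _ _
    have hq : (⊤ : ℝ≥0∞) / ENNReal.ofReal α = ⊤ := by
      rw [ENNReal.div_eq_top]
      exact Or.inr ⟨rfl, ENNReal.ofReal_ne_top⟩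
    unfold interpNorm
    rw [hq, eLpNorm_exponent_top, eLpNorm_exponent_top]
    unfold eLpNormEssSup
    simp only [ENNReal.toReal_top, div_zero, sub_zero]
    set μ := volume.restrict (Ioo (0:ℝ) 1) with hμ
    set FX : ℝ → ℝ := fun u => u ^ (-θ) * (1 - Real.log u) ^ lam * Kfun X1 N1 (a - b) u
      with hFX
    set S := essSup (fun u => (‖FX u‖₊ : ℝ≥0∞)) μ with hS
    have hae : ∀ᵐ u ∂μ, (‖FX u‖₊ : ℝ≥0∞) ≤ S := ENNReal.ae_le_essSup _
    have hN0 : μ {u | ¬ (‖FX u‖₊ : ℝ≥0∞) ≤ S} = 0 := ae_iff.1 hae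
    obtain ⟨N', hsub, hN'meas, hN'0⟩ := exists_measurable_superset_of_null hN0
    have hvol : volume (N' ∩ Ioo (0:ℝ) 1) = 0 := by
      rw [← Measure.restrict_apply' measurableSet_Ioo]
      exact hN'0
    have himg : volume ((fun u : ℝ => u ^ α) '' (N' ∩ Ioo 0 1)) = 0 := by
      have h0 : volume.restrict (N' ∩ Ioo (0:ℝ) 1) = 0 := Measure.restrict_eq_zero.2 hvol
      rw [← setLIntegral_one, lintegral_image_rpow hα0 (hN'meas.inter measurableSet_Ioo)
        (inter_subset_right.trans Ioo_subset_Ioi_self), h0, lintegral_zero_measure]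
    have hae2 : ∀ᵐ t ∂μ, (‖FX (t ^ (1/α))‖₊ : ℝ≥0∞) ≤ S := by
      rw [ae_iff, hμ, Measure.restrict_apply' measurableSet_Ioo]
      refine measure_mono_null ?_ himg
      rintro t ⟨htN, ht⟩
      refine ⟨t ^ (1/α), ⟨hsub htN, Real.rpow_pos_of_pos ht.1 _,
        Real.rpow_lt_one ht.1.le ht.2 (by positivity)⟩, ?_⟩
      show (t ^ (1/α)) ^ α = t
      rw [← Real.rpow_mul ht.1.le, one_div_mul_cancel hα0.ne', Real.rpow_one]
    refine essSup_le_of_ae_le _ ?_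
    filter_upwards [hae2, ae_restrict_mem measurableSet_Ioo] with t hFt ht
    have hu0 : 0 < t ^ (1/α) := Real.rpow_pos_of_pos ht.1 _
    have hu1 : t ^ (1/α) < 1 := Real.rpow_lt_one ht.1.le ht.2 (by positivity)
    have hut : (t ^ (1/α)) ^ α = t := by
      rw [← Real.rpow_mul ht.1.le, one_div_mul_cancel hα0.ne', Real.rpow_one]
    have hkx : 0 ≤ Kfun X1 N1 (a - b) (t ^ (1/α)) := kfun_nonneg X1 N1 hN1 hu0.le _
    have hky : 0 ≤ Kfun Y1 NY1 (T a - T b) t := kfun_nonneg Y1 NY1 hNY1 ht.1.le _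
    have hfx : 0 ≤ FX (t ^ (1/α)) := by
      have hlog : Real.log (t ^ (1/α)) < 0 := Real.log_neg hu0 hu1
      have h1 : (0:ℝ) ≤ 1 - Real.log (t ^ (1/α)) := by linarith
      exact mul_nonneg (mul_nonneg (Real.rpow_nonneg hu0.le _) (Real.rpow_nonneg h1 _)) hkx
    have hgy : 0 ≤ t ^ (-θ) * (1 - Real.log t) ^ (lam * α) * Kfun Y1 NY1 (T a - T b) t := by
      have hlog : Real.log t < 0 := Real.log_neg ht.1 ht.2
      have h1 : (0:ℝ) ≤ 1 - Real.log t := by linarith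
      exact mul_nonneg (mul_nonneg (Real.rpow_nonneg ht.1.le _) (Real.rpow_nonneg h1 _)) hky
    have hkey : Kfun Y1 NY1 (T a - T b) ((t ^ (1/α)) ^ α) ≤
        C * Kfun X1 N1 (a - b) (t ^ (1/α)) ^ α :=
      kfun_key hM0 hα0 X1 Y1 N1 NY1 hN1 hNY1 T hT1 hT0 hTH hdense a b hu0
    rw [hut] at hkey
    have hpoint : t ^ (-θ) * (1 - Real.log t) ^ (lam * α) * Kfun Y1 NY1 (T a - T b) t
        ≤ (C * max 1 (α ^ (lam * α))) * (FX (t ^ (1/α))) ^ α := by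
      have := pointwise_inf (θ := θ) (lam := lam) hα0 hα1 hC hu0 hu1 hkx hky hkey
      rw [hut] at this
      exact this
    calc (‖t ^ (-θ) * (1 - Real.log t) ^ (lam * α) * Kfun Y1 NY1 (T a - T b) t‖₊ : ℝ≥0∞)
        = ENNReal.ofReal (t ^ (-θ) * (1 - Real.log t) ^ (lam * α) *
            Kfun Y1 NY1 (T a - T b) t) := Real.enorm_eq_ofReal hgy
      _ ≤ ENNReal.ofReal ((C * max 1 (α ^ (lam * α))) * (FX (t ^ (1/α))) ^ α) :=
          ENNReal.ofReal_le_ofReal hpoint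
      _ = ENNReal.ofReal (C * max 1 (α ^ (lam * α))) *
            (ENNReal.ofReal (FX (t ^ (1/α)))) ^ α := by
          rw [ENNReal.ofReal_mul (by positivity), ENNReal.ofReal_rpow_of_nonneg hfx hα0.le]
      _ = ENNReal.ofReal (C * max 1 (α ^ (lam * α))) * (‖FX (t ^ (1/α))‖₊ : ℝ≥0∞) ^ α := by
          rw [← enorm_eq_nnnorm, Real.enorm_eq_ofReal hfx]
      _ ≤ ENNReal.ofReal (C * max 1 (α ^ (lam * α))) * S ^ α :=
          mul_le_mul_right (ENNReal.rpow_le_rpow hFt hα0.le) _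
  · -- case p finite
    have hr : 0 < p.toReal := ENNReal.toReal_pos hp0 hpt
    set r : ℝ := p.toReal with hrdef
    refine ⟨(α * C ^ (r / α) * max 1 (α ^ (lam * r))) ^ (α / r), by positivity, ?_⟩
    intro θ hθ0 hθ1 X0 Y0 _ _ X1 Y1 N1 NY1 hN1 hNY1 T hT1 hT0 hTH hdense a b _ _
    have hq0 : p / ENNReal.ofReal α ≠ 0 := by
      rw [Ne, ENNReal.div_eq_zero_iff]
      push_neg
      exact ⟨hp0, ENNReal.ofReal_ne_top⟩
    have hqt : p / ENNReal.ofReal α ≠ ⊤ := by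
      rw [Ne, ENNReal.div_eq_top]
      push_neg
      refine ⟨fun _ => ?_, fun h => absurd h hpt⟩
      rw [Ne, ENNReal.ofReal_eq_zero]
      linarith
    have hqr : (p / ENNReal.ofReal α).toReal = r / α := by
      rw [ENNReal.toReal_div, ENNReal.toReal_ofReal hα0.le]
    unfold interpNorm
    rw [eLpNorm_eq_lintegral_rpow_enorm_toReal hq0 hqt, eLpNorm_eq_lintegral_rpow_enorm_toReal hp0 hpt]
    simp only [hqr, ← hrdef, one_div_div]
    set D : ℝ := α * C ^ (r / α) * max 1 (α ^ (lam * r)) with hDdef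
    have hD : 0 < D := by positivity
    set KY : ℝ → ℝ := Kfun Y1 NY1 (T a - T b) with hKY
    set KX : ℝ → ℝ := Kfun X1 N1 (a - b) with hKX
    have key : ∀ u ∈ Ioo (0:ℝ) 1,
        ENNReal.ofReal |α * u ^ (α - 1)| *
          (‖(u ^ α) ^ (-θ - α / r) * (1 - Real.log (u ^ α)) ^ (lam * α) * KY (u ^ α)‖₊
            : ℝ≥0∞) ^ (r / α)
          ≤ ENNReal.ofReal D *
            (‖u ^ (-θ - 1 / r) * (1 - Real.log u) ^ lam * KX u‖₊ : ℝ≥0∞) ^ r := by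
      intro u hu
      have huα0 : 0 < u ^ α := Real.rpow_pos_of_pos hu.1 α
      have huα1 : u ^ α < 1 := Real.rpow_lt_one hu.1.le hu.2 hα0
      have hkx : 0 ≤ KX u := kfun_nonneg X1 N1 hN1 hu.1.le _
      have hky : 0 ≤ KY (u ^ α) := kfun_nonneg Y1 NY1 hNY1 huα0.le _
      have hgy : 0 ≤ (u ^ α) ^ (-θ - α / r) * (1 - Real.log (u ^ α)) ^ (lam * α)
          * KY (u ^ α) := by
        have hlog : Real.log (u ^ α) < 0 := Real.log_neg huα0 huα1
        have h1 : (0:ℝ) ≤ 1 - Real.log (u ^ α) := by linarith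
        exact mul_nonneg (mul_nonneg (Real.rpow_nonneg huα0.le _) (Real.rpow_nonneg h1 _)) hky
      have hfx : 0 ≤ u ^ (-θ - 1 / r) * (1 - Real.log u) ^ lam * KX u := by
        have hlog : Real.log u < 0 := Real.log_neg hu.1 hu.2
        have h1 : (0:ℝ) ≤ 1 - Real.log u := by linarith
        exact mul_nonneg (mul_nonneg (Real.rpow_nonneg hu.1.le _) (Real.rpow_nonneg h1 _)) hkx
      have hkey : KY (u ^ α) ≤ C * KX u ^ α :=
        kfun_key hM0 hα0 X1 Y1 N1 NY1 hN1 hNY1 T hT1 hT0 hTH hdense a b hu.1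
      rw [← enorm_eq_nnnorm, ← enorm_eq_nnnorm, Real.enorm_eq_ofReal hgy, Real.enorm_eq_ofReal hfx,
        ENNReal.ofReal_rpow_of_nonneg hgy (by positivity),
        ENNReal.ofReal_rpow_of_nonneg hfx hr.le,
        ← ENNReal.ofReal_mul (abs_nonneg _), ← ENNReal.ofReal_mul hD.le]
      exact ENNReal.ofReal_le_ofReal
        (pointwise_fin hα0 hα1 hr hC hu.1 hu.2 hkx hky hkey)
    calc (∫⁻ t in Ioo (0:ℝ) 1,
            (‖t ^ (-θ - α / r) * (1 - Real.log t) ^ (lam * α) * KY t‖₊ : ℝ≥0∞) ^ (r / α))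
          ^ (α / r)
        = (∫⁻ u in Ioo (0:ℝ) 1, ENNReal.ofReal |α * u ^ (α - 1)| *
            (‖(u ^ α) ^ (-θ - α / r) * (1 - Real.log (u ^ α)) ^ (lam * α) * KY (u ^ α)‖₊
              : ℝ≥0∞) ^ (r / α)) ^ (α / r) := by
          rw [lintegral_Ioo_rpow_subst hα0
            (fun t => (‖t ^ (-θ - α / r) * (1 - Real.log t) ^ (lam * α) * KY t‖₊
              : ℝ≥0∞) ^ (r / α))]
      _ ≤ (∫⁻ u in Ioo (0:ℝ) 1, ENNReal.ofReal D *
            (‖u ^ (-θ - 1 / r) * (1 - Real.log u) ^ lam * KX u‖₊ : ℝ≥0∞) ^ r) ^ (α / r) := by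
          refine ENNReal.rpow_le_rpow ?_ (by positivity)
          refine lintegral_mono_ae ?_
          filter_upwards [ae_restrict_mem measurableSet_Ioo] with u hu
          exact key u hu
      _ = (ENNReal.ofReal D) ^ (α / r) *
            ((∫⁻ u in Ioo (0:ℝ) 1,
              (‖u ^ (-θ - 1 / r) * (1 - Real.log u) ^ lam * KX u‖₊ : ℝ≥0∞) ^ r)) ^ (α / r) := by
          rw [lintegral_const_mul' _ _ ENNReal.ofReal_ne_top,
            ENNReal.mul_rpow_of_nonneg _ _ (by positivity : (0:ℝ) ≤ α / r)]
      _ = ENNReal.ofReal (D ^ (α / r)) *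
            ((∫⁻ u in Ioo (0:ℝ) 1,
              (‖u ^ (-θ - 1 / r) * (1 - Real.log u) ^ lam * KX u‖₊ : ℝ≥0∞) ^ r)
                ^ (1 / r)) ^ α := by
          rw [ENNReal.ofReal_rpow_of_pos hD, ← ENNReal.rpow_mul,
            show (1 / r) * α = α / r by ring]
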